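/- Let G be a group acting on a module T such that for every g ∈ G, (g − 1)² = 0 on T, where T is torsion-free. If G is abelian, then the restriction map H¹(G,T') → H¹(G,T) induced by an injection of G-modules T' ↪ T with T/T' torsion-free has kernel contained in the image of Hom(G, T'^G), where T'^G denotes the G-invariants. -/
import Mathlib


/-- Let an abelian group `G` act on a torsion-free abelian group `T` with `(g−1)² = 0` on `T`
for all `g`, and let `T' ⊆ T` be a `G`-stable subgroup with `T/T'` torsion-free.  Any
`1`-cocycle `f : G → T'` whose image in `Z¹(G,T)` is a coboundary takes values in the
`G`-invariants `T'^G` and is a group homomorphism; i.e. the kernel of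
`H¹(G,T') → H¹(G,T)` is contained in the image of `Hom(G, T'^G)`. -/
theorem stmt4 (G : Type) [CommGroup G] (T : Type) [AddCommGroup T]
    [DistribMulAction G T]
    (htf : ∀ (n : ℤ) (x : T), n • x = 0 → n = 0 ∨ x = 0)
    (T' : AddSubgroup T)
    (hstable : ∀ (g : G), ∀ x ∈ T', g • x ∈ T')
    (hquot : ∀ (n : ℤ), n ≠ 0 → ∀ x : T, n • x ∈ T' → x ∈ T')
    (huni : ∀ (g : G) (x : T), g • (g • x - x) = g • x - x)
    (f : G → T')
    (hcocycle : ∀ g h : G, ((f (g * h) : T)) = (f g : T) + g • (f h : T))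
    (hcobound : ∃ t : T, ∀ g : G, (f g : T) = g • t - t) :
    (∀ g σ : G, σ • (f g : T) = (f g : T)) ∧
    (∀ g h : G, ((f (g * h) : T)) = (f g : T) + (f h : T)) := by
  obtain ⟨t, ht⟩ := hcobound
  have comm : ∀ (a b : G) (x : T), a • b • x = b • a • x := fun a b x => by
    rw [← mul_smul, mul_comm, mul_smul]
  have sq : ∀ (a : G) (x : T), a • a • x = a • x + a • x - x := fun a x => by
    have h := huni a x
    rw [smul_sub] at h
    have h2 := sub_eq_iff_eq_add.mp h
    rw [h2]; abel
  have key : ∀ σ g : G, σ • (g • t) - σ • t = g • t - t := by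
    intro σ g
    have h3 := sq (σ * g) t
    simp only [mul_smul] at h3
    -- h3 : σ • g • (σ • g • t) = σ • g • t + σ • g • t - t
    rw [comm g σ (g • t), sq g t] at h3
    simp only [smul_sub, smul_add] at h3
    rw [sq σ (g • t), sq σ t] at h3
    set r := σ • g • t with hr
    set p := σ • t with hp
    set q := g • t with hq
    have hx : (2 : ℤ) • (r + t - (p + q)) = 0 := by
      have h4 := sub_eq_zero_of_eq h3
      rw [← h4]; abel
    rcases htf 2 _ hx with h | h
    · exact absurd h (by norm_num)
    · have : r - p - (q - t) = r + t - (p + q) := by abel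
      have h5 : r - p - (q - t) = 0 := by rw [this, h]
      exact sub_eq_zero.mp h5
  refine ⟨fun g σ => ?_, fun g h => ?_⟩
  · rw [ht g, smul_sub, key σ g]
  · rw [hcocycle g h, ht h]
    congr 1
    rw [smul_sub, key g h]
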